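/- Let l ≥ -1/2, 0 < r_1 < … < r_N, and α_1,…,α_N < 0. If for every k one has (2l+1)/|α_k| ≥ Σ_{j<k} r_j^{l+1}/r_k^l + r_k Σ_{j≥k} (r_k/r_j)^l, then the matrix M with diagonal entries (2l+1)/α_k + r_k and off-diagonal entries M_{jk} = r_{min(j,k)}^{l+1} r_{max(j,k)}^{-l} has no positive eigenvalues (is negative semidefinite). -/

import Mathlib

open Finset Matrix Real

/-- A real symmetric matrix with nonpositive off-diagonal entries and nonnegative
column sums is positive semidefinite. -/
lemma posSemidef_of_colsum {N : ℕ} (A : Matrix (Fin N) (Fin N) ℝ)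
    (hsym : ∀ j k, A j k = A k j) (hoff : ∀ j k, j ≠ k → A j k ≤ 0)
    (hsum : ∀ k, 0 ≤ ∑ j, A j k) : A.PosSemidef := by
  rw [Matrix.posSemidef_iff_dotProduct_mulVec]
  constructor
  · ext j k
    simp [Matrix.conjTranspose_apply, hsym j k]
  · intro x
    have e0 : (star x) ⬝ᵥ (A *ᵥ x) = ∑ j, ∑ k, A j k * x j * x k := by
      simp only [dotProduct, mulVec, star_trivial, Finset.mul_sum]
      exact Finset.sum_congr rfl fun j _ => Finset.sum_congr rfl fun k _ => by
        ring
    rw [e0]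
    have e1 : ∑ j, ∑ k, A j k * x j * x k
        = (∑ j, ∑ k, A j k * (x j ^ 2 / 2)) + (∑ j, ∑ k, A j k * (x k ^ 2 / 2))
          + ∑ j, ∑ k, A j k * (-((x j - x k) ^ 2 / 2)) := by
      rw [← Finset.sum_add_distrib, ← Finset.sum_add_distrib]
      exact Finset.sum_congr rfl fun j _ => by
        rw [← Finset.sum_add_distrib, ← Finset.sum_add_distrib]
        exact Finset.sum_congr rfl fun k _ => by ring
    rw [e1]
    have h1 : 0 ≤ ∑ j, ∑ k, A j k * (x j ^ 2 / 2) := by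
      refine Finset.sum_nonneg fun j _ => ?_
      have : ∑ k, A j k * (x j ^ 2 / 2) = (∑ k, A k j) * (x j ^ 2 / 2) := by
        rw [Finset.sum_mul]
        exact Finset.sum_congr rfl fun k _ => by rw [hsym j k]
      rw [this]
      exact mul_nonneg (hsum j) (by positivity)
    have h2 : 0 ≤ ∑ j, ∑ k, A j k * (x k ^ 2 / 2) := by
      rw [Finset.sum_comm]
      refine Finset.sum_nonneg fun k _ => ?_
      rw [← Finset.sum_mul]
      exact mul_nonneg (hsum k) (by positivity)
    have h3 : 0 ≤ ∑ j, ∑ k, A j k * (-((x j - x k) ^ 2 / 2)) := by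
      refine Finset.sum_nonneg fun j _ => Finset.sum_nonneg fun k _ => ?_
      rcases eq_or_ne j k with rfl | hjk
      · simp
      · rw [mul_neg, ← neg_mul]
        exact mul_nonneg (neg_nonneg.2 (hoff j k hjk)) (by positivity)
    linarith

theorem gershgorin_delta_no_bound_states {N : ℕ} (l : ℝ) (hl : -1/2 ≤ l)
    (r α : Fin N → ℝ) (hr : ∀ i, 0 < r i) (hmono : StrictMono r)
    (hα : ∀ k, α k < 0)
    (h : ∀ k : Fin N,
      (2 * l + 1) / |α k| ≥
        (∑ j ∈ Finset.univ.filter fun j => j < k, r j ^ (l + 1) / r k ^ l)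
          + r k * ∑ j ∈ Finset.univ.filter fun j => k ≤ j, (r k / r j) ^ l) :
    (-(Matrix.of fun j k =>
        if j = k then (2 * l + 1) / α k + r k
        else (min (r j) (r k)) ^ (l + 1) * (max (r j) (r k)) ^ (-l)
      : Matrix (Fin N) (Fin N) ℝ)).PosSemidef := by
  set M : Matrix (Fin N) (Fin N) ℝ := Matrix.of fun j k =>
      if j = k then (2 * l + 1) / α k + r k
      else (min (r j) (r k)) ^ (l + 1) * (max (r j) (r k)) ^ (-l) with hM
  apply posSemidef_of_colsum
  · intro j k
    rcases eq_or_ne j k with rfl | hjk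
    · rfl
    · simp [hM, Matrix.of_apply, hjk, hjk.symm, min_comm (r j), max_comm (r j)]
  · intro j k hjk
    simp only [hM, Matrix.neg_apply, Matrix.of_apply, if_neg hjk, neg_nonpos]
    have h1 : (0:ℝ) < min (r j) (r k) := lt_min (hr j) (hr k)
    have h2 : (0:ℝ) < max (r j) (r k) := lt_of_lt_of_le (hr j) (le_max_left _ _)
    exact mul_nonneg (Real.rpow_pos_of_pos h1 _).le (Real.rpow_pos_of_pos h2 _).le
  · intro k
    have key : ∑ j, M j k ≤ 0 := by
      rw [← Finset.sum_erase_add _ _ (Finset.mem_univ k),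
        ← Finset.sum_filter_add_sum_filter_not (Finset.univ.erase k) (fun j => j < k)]
      have ea : (Finset.univ.erase k).filter (fun j => j < k)
          = Finset.univ.filter (fun j => j < k) := by
        ext j
        simp only [Finset.mem_filter, Finset.mem_erase, Finset.mem_univ, true_and, and_true]
        exact ⟨fun h => h.2, fun h => ⟨ne_of_lt h, h⟩⟩
      have eb : (Finset.univ.erase k).filter (fun j => ¬ j < k)
          = Finset.univ.filter (fun j => k < j) := by
        ext j
        simp only [Finset.mem_filter, Finset.mem_erase, Finset.mem_univ, true_and, and_true]
        exact ⟨fun h => (not_lt.1 h.2).lt_of_ne h.1.symm, fun h => ⟨ne_of_gt h, not_lt.2 h.le⟩⟩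
      rw [ea, eb]
      have s1 : ∑ j ∈ Finset.univ.filter (fun j => j < k), M j k
          = ∑ j ∈ Finset.univ.filter (fun j => j < k), r j ^ (l + 1) / r k ^ l := by
        refine Finset.sum_congr rfl fun j hj => ?_
        have hjk : j < k := (Finset.mem_filter.1 hj).2
        simp only [hM, Matrix.of_apply, if_neg (ne_of_lt hjk),
          min_eq_left (hmono hjk).le, max_eq_right (hmono hjk).le,
          Real.rpow_neg (hr k).le]
        rw [div_eq_mul_inv]
      have s2 : ∑ j ∈ Finset.univ.filter (fun j => k < j), M j k
          = ∑ j ∈ Finset.univ.filter (fun j => k < j), r k * (r k / r j) ^ l := by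
        refine Finset.sum_congr rfl fun j hj => ?_
        have hkj : k < j := (Finset.mem_filter.1 hj).2
        simp only [hM, Matrix.of_apply, if_neg (ne_of_gt hkj),
          min_eq_right (hmono hkj).le, max_eq_left (hmono hkj).le]
        rw [Real.div_rpow (hr k).le (hr j).le, Real.rpow_neg (hr j).le,
          Real.rpow_add (hr k), Real.rpow_one]
        ring
      have hMkk : M k k = (2 * l + 1) / α k + r k := by simp [hM]
      have hins : Finset.univ.filter (fun j => k ≤ j)
          = insert k (Finset.univ.filter fun j => k < j) := by
        ext j
        simp only [Finset.mem_filter, Finset.mem_univ, true_and, Finset.mem_insert]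
        constructor
        · intro hle
          rcases eq_or_lt_of_le hle with heq | hlt
          · exact Or.inl heq.symm
          · exact Or.inr hlt
        · rintro (rfl | hlt)
          · exact le_refl _
          · exact hlt.le
      have hk := h k
      rw [hins, Finset.sum_insert (by simp)] at hk
      rw [div_self (hr k).ne', Real.one_rpow, mul_add, mul_one, Finset.mul_sum] at hk
      have habs : (2 * l + 1) / |α k| = -((2 * l + 1) / α k) := by
        rw [abs_of_neg (hα k), div_neg]
      rw [habs] at hk
      rw [s1, s2, hMkk]
      linarith
    have : ∑ j, (-M) j k = -(∑ j, M j k) := by simp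
    rw [this]
    linarith
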